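/- For s ≥ 0, θ ∈ ℝ, β = s²/2, the map H_{s,θ}(z₁,z₂) = ((−s z₂ + (1−β) z₁ + β)/(−s z₂ − β z₁ + 1 + β), e^{iθ}(z₂ + s z₁ − s)/(−s z₂ − β z₁ + 1 + β)) is an automorphism of 𝔹², and its complex differential at the boundary point e₁ = (1,0) is the matrix [[1, 0], [s e^{iθ}, e^{iθ}]]. -/

import Mathlib

open Complex

lemma keyC (t b : ℝ) (hb : (b:ℂ) = (t:ℂ)^2/2) (z1 z2 : ℂ) :
    (-(t:ℂ)*z2 - b*z1 + 1 + b) * (starRingEnd ℂ) (-(t:ℂ)*z2 - b*z1 + 1 + b)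
      - (-(t:ℂ)*z2 + (1-b)*z1 + b) * (starRingEnd ℂ) (-(t:ℂ)*z2 + (1-b)*z1 + b)
      - (z2 + t*z1 - t) * (starRingEnd ℂ) (z2 + t*z1 - t)
    = 1 - z1 * (starRingEnd ℂ) z1 - z2 * (starRingEnd ℂ) z2 := by
  simp only [map_add, map_sub, map_mul, map_neg, map_one, Complex.conj_ofReal]
  rw [hb]; ring

lemma keySq (t b : ℝ) (hb : b = t^2/2) (z : ℂ × ℂ) :
    normSq (-(t:ℂ)*z.2 - b*z.1 + 1 + b)
    = 1 - normSq z.1 - normSq z.2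
      + normSq (-(t:ℂ)*z.2 + (1-b)*z.1 + b) + normSq (z.2 + t*z.1 - t) := by
  have hb' : (b:ℂ) = (t:ℂ)^2/2 := by rw [hb]; push_cast; ring
  have h := keyC t b hb' z.1 z.2
  simp only [Complex.mul_conj] at h
  have h2 : normSq (-(t:ℂ)*z.2 - b*z.1 + 1 + b)
      - normSq (-(t:ℂ)*z.2 + (1-b)*z.1 + b) - normSq (z.2 + t*z.1 - t)
      = 1 - normSq z.1 - normSq z.2 := by exact_mod_cast h
  linarith

/-- The open unit ball of ℂ². -/
def B2 : Set (ℂ × ℂ) := {z : ℂ × ℂ | ‖z.1‖^2 + ‖z.2‖^2 < 1}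

lemma nsq (w : ℂ) : ‖w‖^2 = normSq w := by
  rw [Complex.sq_norm]

lemma den_pos (t b : ℝ) (hb : b = t^2/2) {z : ℂ × ℂ} (hz : z ∈ B2) :
    0 < normSq (-(t:ℂ)*z.2 - b*z.1 + 1 + b) := by
  have hz' : normSq z.1 + normSq z.2 < 1 := by
    simpa [B2, nsq, Complex.sq_norm] using hz
  have := keySq t b hb z
  have h1 := normSq_nonneg (-(t:ℂ)*z.2 + (1-b)*z.1 + b)
  have h2 := normSq_nonneg (z.2 + t*z.1 - t)
  linarith

lemma den_ne (t b : ℝ) (hb : b = t^2/2) {z : ℂ × ℂ} (hz : z ∈ B2) :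
    -(t:ℂ)*z.2 - b*z.1 + 1 + b ≠ 0 := by
  have := den_pos t b hb hz
  intro h; rw [h] at this; simp at this

lemma memB2 (t b : ℝ) (hb : b = t^2/2) {z : ℂ × ℂ} (hz : z ∈ B2) :
    ‖(-(t:ℂ)*z.2 + (1-b)*z.1 + b)/(-(t:ℂ)*z.2 - b*z.1 + 1 + b)‖^2 +
    ‖(z.2 + t*z.1 - t)/(-(t:ℂ)*z.2 - b*z.1 + 1 + b)‖^2 < 1 := by
  have hz' : normSq z.1 + normSq z.2 < 1 := by simpa [B2, nsq, Complex.sq_norm] using hz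
  have hpos := den_pos t b hb hz
  have hk := keySq t b hb z
  rw [nsq, nsq, map_div₀, map_div₀, ← add_div, div_lt_one hpos]
  linarith

lemma comp_id (t : ℝ) (z : ℂ × ℂ)
    (hD : -(t:ℂ)*z.2 - (t:ℂ)^2/2*z.1 + 1 + (t:ℂ)^2/2 ≠ 0) :
    ((t:ℂ) * ((z.2 + t*z.1 - t)/(-(t:ℂ)*z.2 - (t:ℂ)^2/2*z.1 + 1 + (t:ℂ)^2/2))
        + (1 - (t:ℂ)^2/2) * ((-(t:ℂ)*z.2 + (1-(t:ℂ)^2/2)*z.1 + (t:ℂ)^2/2)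
            /(-(t:ℂ)*z.2 - (t:ℂ)^2/2*z.1 + 1 + (t:ℂ)^2/2)) + (t:ℂ)^2/2)
      / ((t:ℂ) * ((z.2 + t*z.1 - t)/(-(t:ℂ)*z.2 - (t:ℂ)^2/2*z.1 + 1 + (t:ℂ)^2/2))
        - (t:ℂ)^2/2 * ((-(t:ℂ)*z.2 + (1-(t:ℂ)^2/2)*z.1 + (t:ℂ)^2/2)
            /(-(t:ℂ)*z.2 - (t:ℂ)^2/2*z.1 + 1 + (t:ℂ)^2/2)) + 1 + (t:ℂ)^2/2) = z.1
    ∧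
    (((z.2 + t*z.1 - t)/(-(t:ℂ)*z.2 - (t:ℂ)^2/2*z.1 + 1 + (t:ℂ)^2/2))
        - (t:ℂ) * ((-(t:ℂ)*z.2 + (1-(t:ℂ)^2/2)*z.1 + (t:ℂ)^2/2)
            /(-(t:ℂ)*z.2 - (t:ℂ)^2/2*z.1 + 1 + (t:ℂ)^2/2)) + (t:ℂ))
      / ((t:ℂ) * ((z.2 + t*z.1 - t)/(-(t:ℂ)*z.2 - (t:ℂ)^2/2*z.1 + 1 + (t:ℂ)^2/2))
        - (t:ℂ)^2/2 * ((-(t:ℂ)*z.2 + (1-(t:ℂ)^2/2)*z.1 + (t:ℂ)^2/2)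
            /(-(t:ℂ)*z.2 - (t:ℂ)^2/2*z.1 + 1 + (t:ℂ)^2/2)) + 1 + (t:ℂ)^2/2) = z.2 := by
  generalize hDdef : -(t:ℂ)*z.2 - (t:ℂ)^2/2*z.1 + 1 + (t:ℂ)^2/2 = D at hD ⊢
  have hDg : (t:ℂ) * ((z.2 + t*z.1 - t)/D)
        - (t:ℂ)^2/2 * ((-(t:ℂ)*z.2 + (1-(t:ℂ)^2/2)*z.1 + (t:ℂ)^2/2)/D) + 1 + (t:ℂ)^2/2
      = D⁻¹ := by
    rw [inv_eq_one_div, eq_div_iff hD]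
    field_simp [hD]
    try rw [div_eq_iff (by simp [hD])]
    rw [← hDdef]
    ring
  rw [hDg]
  have h2 : D⁻¹ ≠ 0 := inv_ne_zero hD
  constructor
  · rw [div_eq_iff h2, inv_eq_one_div, mul_one_div, eq_div_iff hD]
    field_simp [hD]
    try rw [div_eq_iff (by simp [hD])]
    rw [← hDdef]
    ring
  · rw [div_eq_iff h2, inv_eq_one_div, mul_one_div, eq_div_iff hD]
    field_simp [hD]
    try rw [div_eq_iff (by simp [hD])]
    rw [← hDdef]
    ring

set_option maxHeartbeats 1600000 in
theorem H_s_theta_automorphism_and_differential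
    (s θ : ℝ) (hs : 0 ≤ s) (β : ℝ) (hβ : β = s^2 / 2)
    (H : ℂ × ℂ → ℂ × ℂ)
    (hH : ∀ z : ℂ × ℂ,
      H z = ((-(s:ℂ) * z.2 + (1 - (β:ℂ)) * z.1 + (β:ℂ)) /
               (-(s:ℂ) * z.2 - (β:ℂ) * z.1 + 1 + (β:ℂ)),
             Complex.exp (θ * Complex.I) * (z.2 + (s:ℂ) * z.1 - (s:ℂ)) /
               (-(s:ℂ) * z.2 - (β:ℂ) * z.1 + 1 + (β:ℂ)))) :
    Set.BijOn H B2 B2 ∧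
    ∃ L : (ℂ × ℂ) →L[ℂ] (ℂ × ℂ),
      (∀ v : ℂ × ℂ,
        L v = (v.1, (s:ℂ) * Complex.exp (θ * Complex.I) * v.1 +
                Complex.exp (θ * Complex.I) * v.2)) ∧
      HasFDerivAt H L ((1 : ℂ), (0 : ℂ)) := by
  have hc : ((β:ℝ) : ℂ) = (s:ℂ)^2/2 := by rw [hβ]; push_cast; ring
  have hβn : β = (-s)^2/2 := by rw [hβ]; ring
  simp only [hc] at hH
  set E : ℂ := Complex.exp (θ * Complex.I) with hEdef
  have hE : E ≠ 0 := Complex.exp_ne_zero _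
  have hnE : ‖E‖ = 1 := by
    rw [hEdef, Complex.norm_exp]; simp
  set G : ℂ × ℂ → ℂ × ℂ := fun w =>
    (((s:ℂ) * (E⁻¹ * w.2) + (1 - (s:ℂ)^2/2) * w.1 + (s:ℂ)^2/2) /
       ((s:ℂ) * (E⁻¹ * w.2) - (s:ℂ)^2/2 * w.1 + 1 + (s:ℂ)^2/2),
     (E⁻¹ * w.2 - (s:ℂ) * w.1 + (s:ℂ)) /
       ((s:ℂ) * (E⁻¹ * w.2) - (s:ℂ)^2/2 * w.1 + 1 + (s:ℂ)^2/2)) with hGdef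
  have hmapsH : Set.MapsTo H B2 B2 := by
    intro z hz
    rw [hH]
    have h := memB2 s β hβ hz
    rw [hc] at h
    simp only [B2, Set.mem_setOf_eq] at *
    rw [mul_div_assoc, norm_mul, hnE, one_mul]
    exact h
  have huB2 : ∀ w : ℂ × ℂ, w ∈ B2 → ((w.1, E⁻¹ * w.2) : ℂ × ℂ) ∈ B2 := by
    intro w hw
    simp only [B2, Set.mem_setOf_eq] at *
    rw [norm_mul, norm_inv, hnE]
    simpa using hw
  have hmapsG : Set.MapsTo G B2 B2 := by
    intro w hw
    have h := memB2 (-s) β hβn (huB2 w hw)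
    rw [hc] at h
    push_cast at h
    simp only [B2, Set.mem_setOf_eq, hGdef] at *
    convert h using 4 <;> ring
  have hDne : ∀ z : ℂ × ℂ, z ∈ B2 →
      -(s:ℂ) * z.2 - (s:ℂ)^2/2 * z.1 + 1 + (s:ℂ)^2/2 ≠ 0 := by
    intro z hz
    have h := den_ne s β hβ hz
    rw [hc] at h
    exact h
  have hDgne : ∀ w : ℂ × ℂ, w ∈ B2 →
      -((-s:ℝ):ℂ) * (E⁻¹ * w.2) - ((-s:ℝ):ℂ)^2/2 * w.1 + 1 + ((-s:ℝ):ℂ)^2/2 ≠ 0 := by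
    intro w hw
    have h := den_ne (-s) β hβn (huB2 w hw)
    rw [hc] at h
    push_cast at h ⊢
    convert h using 2 <;> ring
  have hinv : Set.InvOn G H B2 B2 := by
    constructor
    · intro z hz
      have hD := hDne z hz
      rw [hH]
      simp only [hGdef]
      simp only [mul_div_assoc, inv_mul_cancel_left₀ hE]
      obtain ⟨e1, e2⟩ := comp_id s z hD
      exact Prod.ext e1 e2
    · intro w hw
      have hD' := hDgne w hw
      obtain ⟨e1, e2⟩ := comp_id (-s) (w.1, E⁻¹ * w.2) hD'
      rw [hH]
      simp only [hGdef]
      refine Prod.ext ?_ ?_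
      · show (-(s:ℂ) * ((E⁻¹ * w.2 - (s:ℂ) * w.1 + (s:ℂ)) / ((s:ℂ) * (E⁻¹ * w.2) - (s:ℂ)^2/2 * w.1 + 1 + (s:ℂ)^2/2)) + (1 - (s:ℂ)^2/2) * (((s:ℂ) * (E⁻¹ * w.2) + (1 - (s:ℂ)^2/2) * w.1 + (s:ℂ)^2/2) / ((s:ℂ) * (E⁻¹ * w.2) - (s:ℂ)^2/2 * w.1 + 1 + (s:ℂ)^2/2)) + (s:ℂ)^2/2) / (-(s:ℂ) * ((E⁻¹ * w.2 - (s:ℂ) * w.1 + (s:ℂ)) / ((s:ℂ) * (E⁻¹ * w.2) - (s:ℂ)^2/2 * w.1 + 1 + (s:ℂ)^2/2)) - (s:ℂ)^2/2 * (((s:ℂ) * (E⁻¹ * w.2) + (1 - (s:ℂ)^2/2) * w.1 + (s:ℂ)^2/2) / ((s:ℂ) * (E⁻¹ * w.2) - (s:ℂ)^2/2 * w.1 + 1 + (s:ℂ)^2/2)) + 1 + (s:ℂ)^2/2) = w.1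
        calc (-(s:ℂ) * ((E⁻¹ * w.2 - (s:ℂ) * w.1 + (s:ℂ)) / ((s:ℂ) * (E⁻¹ * w.2) - (s:ℂ)^2/2 * w.1 + 1 + (s:ℂ)^2/2)) + (1 - (s:ℂ)^2/2) * (((s:ℂ) * (E⁻¹ * w.2) + (1 - (s:ℂ)^2/2) * w.1 + (s:ℂ)^2/2) / ((s:ℂ) * (E⁻¹ * w.2) - (s:ℂ)^2/2 * w.1 + 1 + (s:ℂ)^2/2)) + (s:ℂ)^2/2) / (-(s:ℂ) * ((E⁻¹ * w.2 - (s:ℂ) * w.1 + (s:ℂ)) / ((s:ℂ) * (E⁻¹ * w.2) - (s:ℂ)^2/2 * w.1 + 1 + (s:ℂ)^2/2)) - (s:ℂ)^2/2 * (((s:ℂ) * (E⁻¹ * w.2) + (1 - (s:ℂ)^2/2) * w.1 + (s:ℂ)^2/2) / ((s:ℂ) * (E⁻¹ * w.2) - (s:ℂ)^2/2 * w.1 + 1 + (s:ℂ)^2/2)) + 1 + (s:ℂ)^2/2)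
            = (((-s:ℝ):ℂ) * (((w.1, E⁻¹ * w.2).2 + ((-s:ℝ):ℂ)*(w.1, E⁻¹ * w.2).1 - ((-s:ℝ):ℂ))/(-((-s:ℝ):ℂ)*(w.1, E⁻¹ * w.2).2 - ((-s:ℝ):ℂ)^2/2*(w.1, E⁻¹ * w.2).1 + 1 + ((-s:ℝ):ℂ)^2/2)) + (1 - ((-s:ℝ):ℂ)^2/2) * ((-((-s:ℝ):ℂ)*(w.1, E⁻¹ * w.2).2 + (1-((-s:ℝ):ℂ)^2/2)*(w.1, E⁻¹ * w.2).1 + ((-s:ℝ):ℂ)^2/2)/(-((-s:ℝ):ℂ)*(w.1, E⁻¹ * w.2).2 - ((-s:ℝ):ℂ)^2/2*(w.1, E⁻¹ * w.2).1 + 1 + ((-s:ℝ):ℂ)^2/2)) + ((-s:ℝ):ℂ)^2/2) / (((-s:ℝ):ℂ) * (((w.1, E⁻¹ * w.2).2 + ((-s:ℝ):ℂ)*(w.1, E⁻¹ * w.2).1 - ((-s:ℝ):ℂ))/(-((-s:ℝ):ℂ)*(w.1, E⁻¹ * w.2).2 - ((-s:ℝ):ℂ)^2/2*(w.1, E⁻¹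 * w.2).1 + 1 + ((-s:ℝ):ℂ)^2/2)) - ((-s:ℝ):ℂ)^2/2 * ((-((-s:ℝ):ℂ)*(w.1, E⁻¹ * w.2).2 + (1-((-s:ℝ):ℂ)^2/2)*(w.1, E⁻¹ * w.2).1 + ((-s:ℝ):ℂ)^2/2)/(-((-s:ℝ):ℂ)*(w.1, E⁻¹ * w.2).2 - ((-s:ℝ):ℂ)^2/2*(w.1, E⁻¹ * w.2).1 + 1 + ((-s:ℝ):ℂ)^2/2)) + 1 + ((-s:ℝ):ℂ)^2/2) := by push_cast; ring
          _ = w.1 := e1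
      · show E * (((E⁻¹ * w.2 - (s:ℂ) * w.1 + (s:ℂ)) / ((s:ℂ) * (E⁻¹ * w.2) - (s:ℂ)^2/2 * w.1 + 1 + (s:ℂ)^2/2)) + (s:ℂ) * (((s:ℂ) * (E⁻¹ * w.2) + (1 - (s:ℂ)^2/2) * w.1 + (s:ℂ)^2/2) / ((s:ℂ) * (E⁻¹ * w.2) - (s:ℂ)^2/2 * w.1 + 1 + (s:ℂ)^2/2)) - (s:ℂ)) / (-(s:ℂ) * ((E⁻¹ * w.2 - (s:ℂ) * w.1 + (s:ℂ)) / ((s:ℂ) * (E⁻¹ * w.2) - (s:ℂ)^2/2 * w.1 + 1 + (s:ℂ)^2/2)) - (s:ℂ)^2/2 * (((s:ℂ) * (E⁻¹ * w.2) + (1 - (s:ℂ)^2/2) * w.1 + (s:ℂ)^2/2) / ((s:ℂ) * (E⁻¹ * w.2) - (s:ℂ)^2/2 * w.1 + 1 + (s:ℂ)^2/2)) + 1 + (s:ℂ)^2/2) = w.2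
        calc E * (((E⁻¹ * w.2 - (s:ℂ) * w.1 + (s:ℂ)) / ((s:ℂ) * (E⁻¹ * w.2) - (s:ℂ)^2/2 * w.1 + 1 + (s:ℂ)^2/2)) + (s:ℂ) * (((s:ℂ) * (E⁻¹ * w.2) + (1 - (s:ℂ)^2/2) * w.1 + (s:ℂ)^2/2) / ((s:ℂ) * (E⁻¹ * w.2) - (s:ℂ)^2/2 * w.1 + 1 + (s:ℂ)^2/2)) - (s:ℂ)) / (-(s:ℂ) * ((E⁻¹ * w.2 - (s:ℂ) * w.1 + (s:ℂ)) / ((s:ℂ) * (E⁻¹ * w.2) - (s:ℂ)^2/2 * w.1 + 1 + (s:ℂ)^2/2)) - (s:ℂ)^2/2 * (((s:ℂ) * (E⁻¹ * w.2) + (1 - (s:ℂ)^2/2) * w.1 + (s:ℂ)^2/2) / ((s:ℂ) * (E⁻¹ * w.2) - (s:ℂ)^2/2 * w.1 + 1 + (s:ℂ)^2/2)) + 1 + (s:ℂ)^2/2)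
            = E * (((((w.1, E⁻¹ * w.2).2 + ((-s:ℝ):ℂ)*(w.1, E⁻¹ * w.2).1 - ((-s:ℝ):ℂ))/(-((-s:ℝ):ℂ)*(w.1, E⁻¹ * w.2).2 - ((-s:ℝ):ℂ)^2/2*(w.1, E⁻¹ * w.2).1 + 1 + ((-s:ℝ):ℂ)^2/2)) - ((-s:ℝ):ℂ) * ((-((-s:ℝ):ℂ)*(w.1, E⁻¹ * w.2).2 + (1-((-s:ℝ):ℂ)^2/2)*(w.1, E⁻¹ * w.2).1 + ((-s:ℝ):ℂ)^2/2)/(-((-s:ℝ):ℂ)*(w.1, E⁻¹ * w.2).2 - ((-s:ℝ):ℂ)^2/2*(w.1, E⁻¹ * w.2).1 + 1 + ((-s:ℝ):ℂ)^2/2)) + ((-s:ℝ):ℂ)) / (((-s:ℝ):ℂ) * (((w.1, E⁻¹ * w.2).2 + ((-s:ℝ):ℂ)*(w.1, E⁻¹ * w.2).1 - ((-s:ℝ):ℂ))/(-((-s:ℝ):ℂ)*(w.1, E⁻¹ * w.2).2 - ((-s:ℝ):ℂ)^2/2*(w.1, E⁻¹ * w.2).1 + 1 + ((-s:ℝ):ℂ)^2/2))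 - ((-s:ℝ):ℂ)^2/2 * ((-((-s:ℝ):ℂ)*(w.1, E⁻¹ * w.2).2 + (1-((-s:ℝ):ℂ)^2/2)*(w.1, E⁻¹ * w.2).1 + ((-s:ℝ):ℂ)^2/2)/(-((-s:ℝ):ℂ)*(w.1, E⁻¹ * w.2).2 - ((-s:ℝ):ℂ)^2/2*(w.1, E⁻¹ * w.2).1 + 1 + ((-s:ℝ):ℂ)^2/2)) + 1 + ((-s:ℝ):ℂ)^2/2)) := by push_cast; ring
          _ = E * (E⁻¹ * w.2) := by rw [e2]
          _ = w.2 := mul_inv_cancel_left₀ hE w.2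
  constructor
  · exact hinv.bijOn hmapsH hmapsG
  · have hHfun : H = fun z : ℂ × ℂ =>
        ((-(s:ℂ) * z.2 + (1 - (s:ℂ)^2/2) * z.1 + (s:ℂ)^2/2) /
          (-(s:ℂ) * z.2 - (s:ℂ)^2/2 * z.1 + 1 + (s:ℂ)^2/2),
         E * (z.2 + (s:ℂ) * z.1 - (s:ℂ)) /
          (-(s:ℂ) * z.2 - (s:ℂ)^2/2 * z.1 + 1 + (s:ℂ)^2/2)) := funext hH
    have h1 : HasFDerivAt (fun z : ℂ × ℂ => z.1)
        (ContinuousLinearMap.fst ℂ ℂ ℂ) ((1:ℂ), (0:ℂ)) := hasFDerivAt_fst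
    have h2 : HasFDerivAt (fun z : ℂ × ℂ => z.2)
        (ContinuousLinearMap.snd ℂ ℂ ℂ) ((1:ℂ), (0:ℂ)) := hasFDerivAt_snd
    have hnum1 : HasFDerivAt
        (fun z : ℂ × ℂ => -(s:ℂ) * z.2 + (1 - (s:ℂ)^2/2) * z.1 + (s:ℂ)^2/2) _
        ((1:ℂ), (0:ℂ)) :=
      ((h2.const_mul (-(s:ℂ))).add (h1.const_mul (1 - (s:ℂ)^2/2))).add_const ((s:ℂ)^2/2)
    have hden : HasFDerivAt
        (fun z : ℂ × ℂ => -(s:ℂ) * z.2 - (s:ℂ)^2/2 * z.1 + 1 + (s:ℂ)^2/2) _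
        ((1:ℂ), (0:ℂ)) :=
      (((h2.const_mul (-(s:ℂ))).sub (h1.const_mul ((s:ℂ)^2/2))).add_const 1).add_const ((s:ℂ)^2/2)
    have hnum2 : HasFDerivAt (fun z : ℂ × ℂ => E * (z.2 + (s:ℂ) * z.1 - (s:ℂ))) _
        ((1:ℂ), (0:ℂ)) :=
      ((h2.add (h1.const_mul (s:ℂ))).sub_const (s:ℂ)).const_mul E
    have hdval : (fun z : ℂ × ℂ => -(s:ℂ) * z.2 - (s:ℂ)^2/2 * z.1 + 1 + (s:ℂ)^2/2)
        ((1:ℂ), (0:ℂ)) = 1 := by norm_num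
    have hinv0 : HasFDerivAt (Inv.inv : ℂ → ℂ)
        (-(ContinuousLinearMap.mulLeftRight ℂ ℂ (1:ℂ)⁻¹ (1:ℂ)⁻¹))
        ((fun z : ℂ × ℂ => -(s:ℂ) * z.2 - (s:ℂ)^2/2 * z.1 + 1 + (s:ℂ)^2/2) ((1:ℂ), (0:ℂ))) := by
      rw [hdval]
      exact hasFDerivAt_inv' one_ne_zero
    have hinvd : HasFDerivAt
        (fun z : ℂ × ℂ => (-(s:ℂ) * z.2 - (s:ℂ)^2/2 * z.1 + 1 + (s:ℂ)^2/2)⁻¹) _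
        ((1:ℂ), (0:ℂ)) := hinv0.comp ((1:ℂ), (0:ℂ)) hden
    have hq1 := hnum1.mul hinvd
    have hq2 := hnum2.mul hinvd
    have hder' := HasFDerivAt.prodMk hq1 hq2
    have hfe : H = (fun z : ℂ × ℂ =>
        ((-(s:ℂ) * z.2 + (1 - (s:ℂ)^2/2) * z.1 + (s:ℂ)^2/2) *
          (-(s:ℂ) * z.2 - (s:ℂ)^2/2 * z.1 + 1 + (s:ℂ)^2/2)⁻¹,
         E * (z.2 + (s:ℂ) * z.1 - (s:ℂ)) *
          (-(s:ℂ) * z.2 - (s:ℂ)^2/2 * z.1 + 1 + (s:ℂ)^2/2)⁻¹)) := by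
      rw [hHfun]; funext z; simp [div_eq_mul_inv]
    rw [hfe]
    refine ⟨_, fun v => ?_, hder'⟩
    simp only [ContinuousLinearMap.prod_apply, ContinuousLinearMap.smul_apply,
      ContinuousLinearMap.sub_apply, ContinuousLinearMap.add_apply,
      ContinuousLinearMap.coe_fst', ContinuousLinearMap.coe_snd',
      ContinuousLinearMap.coe_comp', Function.comp_apply, smul_eq_mul,
      ContinuousLinearMap.neg_apply, ContinuousLinearMap.mulLeftRight_apply]
    norm_num
    constructor <;> ring
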